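/- Let A be a left brace and let a ∈ ζ₂(⋆,A) be an element of infinite additive order. Let c = a ⋆ a. If c also has infinite additive order, then br(2a), the subbrace generated by 2a = a + a, is not an ideal of A. -/

import Mathlib

/-!
Basic theory of left braces (skew left braces of abelian type), following
Dixon–Kurdachenko–Subbotin, "On the structure of braces whose subideals are ideals".
-/

universe u v

/-- A left brace: an abelian group `(A,+)`, a group `(A,·)`, satisfying
`a(b+c) = ab + ac - a`.  (The additive and multiplicative identities then coincide.) -/
class LeftBrace (A : Type u) extends AddCommGroup A, Group A where
  mul_add_eq : ∀ a b c : A, a * (b + c) = a * b + a * c - a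

namespace LeftBrace

variable {A : Type u} [LeftBrace A]

/-- The star operation `a ⋆ b = ab - a - b`. -/
def bstar (a b : A) : A := a * b - a - b

/-- A subset of a left brace is a subbrace if it is closed under the additive-group
and multiplicative-group operations (equivalently, it is a left brace under the
restricted operations). -/
structure IsSubbrace (S : Set A) : Prop where
  zero_mem : (0 : A) ∈ S
  add_mem : ∀ {a b : A}, a ∈ S → b ∈ S → a + b ∈ S
  neg_mem : ∀ {a : A}, a ∈ S → -a ∈ S
  mul_mem : ∀ {a b : A}, a ∈ S → b ∈ S → a * b ∈ S
  inv_mem : ∀ {a : A}, a ∈ S → a⁻¹ ∈ S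

/-- `I` is an ideal of the subbrace `J`: `I ⊆ J`, both are subbraces, and
`a ⋆ z, z ⋆ a ∈ I` for all `a ∈ J`, `z ∈ I`. -/
structure IsIdealIn (I J : Set A) : Prop where
  subset : I ⊆ J
  subbrace : IsSubbrace I
  ambient_subbrace : IsSubbrace J
  star_mem_left : ∀ a ∈ J, ∀ z ∈ I, bstar a z ∈ I
  star_mem_right : ∀ a ∈ J, ∀ z ∈ I, bstar z a ∈ I

/-- `I` is an ideal of the brace `A`. -/
def IsIdeal (I : Set A) : Prop := IsIdealIn I (Set.univ : Set A)

/-- `A` is a T-brace if being an ideal is a transitive relation: an ideal of an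
ideal of `A` is an ideal of `A`. -/
def IsTBrace (A : Type u) [LeftBrace A] : Prop :=
  ∀ I J : Set A, IsIdealIn I J → IsIdeal J → IsIdeal I

/-- The `⋆`-center `ζ(⋆,A) = {a | a ⋆ x = x ⋆ a = 0 for all x}`. -/
def starCenter (A : Type u) [LeftBrace A] : Set A :=
  {a : A | ∀ x : A, bstar a x = 0 ∧ bstar x a = 0}

/-- The preimage in `A` of the `⋆`-center of the quotient of `A` by (the ideal) `S`:
`a` belongs to it iff `a ⋆ x ∈ S` and `x ⋆ a ∈ S` for every `x ∈ A`. -/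
def nextCenter (A : Type u) [LeftBrace A] (S : Set A) : Set A :=
  {a : A | ∀ x : A, bstar a x ∈ S ∧ bstar x a ∈ S}

/-- The upper `⋆`-central series, indexed by naturals:
`ζ₀(⋆,A) = 0` and `ζ_{n+1}(⋆,A)/ζ_n(⋆,A) = ζ(⋆, A/ζ_n(⋆,A))`. -/
def zetaNat (A : Type u) [LeftBrace A] : ℕ → Set A
  | 0 => ({0} : Set A)
  | n + 1 => nextCenter A (zetaNat A n)

/-- The upper `⋆`-central series, indexed by ordinals (unions at limit ordinals). -/
noncomputable def zetaOrd (A : Type u) [LeftBrace A] (o : Ordinal.{v}) : Set A :=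
  Ordinal.limitRecOn o (({0} : Set A))
    (fun _ ih => nextCenter A ih)
    (fun o _ ih => ⋃ (o' : Ordinal) (h : o' < o), ih o' h)

/-- The upper `⋆`-hypercenter `ζ_∞(⋆,A)`: the final (stable) term of the upper
`⋆`-central series, i.e. the union of all its terms. -/
noncomputable def starHypercenter (A : Type u) [LeftBrace A] : Set A :=
  ⋃ o : Ordinal.{u}, zetaOrd A o

/-- `A` is `⋆`-hypercentral if `A = ζ_γ(⋆,A)` for some ordinal `γ`. -/
def IsStarHypercentral (A : Type u) [LeftBrace A] : Prop :=
  ∃ γ : Ordinal.{u}, zetaOrd A γ = (Set.univ : Set A)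

/-- `K ⋆ L`: the additive subgroup of `(A,+)` generated by all `x ⋆ y`, `x ∈ K`, `y ∈ L`. -/
def setStar (K L : Set A) : AddSubgroup A :=
  AddSubgroup.closure {z : A | ∃ x ∈ K, ∃ y ∈ L, z = bstar x y}

/-- `rightStarSeries A n = A^{(n+1)}`, where `A^{(1)} = A` and `A^{(n+1)} = A^{(n)} ⋆ A`. -/
def rightStarSeries (A : Type u) [LeftBrace A] : ℕ → Set A
  | 0 => (Set.univ : Set A)
  | n + 1 => ((setStar (rightStarSeries A n) (Set.univ : Set A) : AddSubgroup A) : Set A)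

/-- `leftStarSeries A n = A^{n+1}`, where `A^1 = A` and `A^{n+1} = A ⋆ A^n`. -/
def leftStarSeries (A : Type u) [LeftBrace A] : ℕ → Set A
  | 0 => (Set.univ : Set A)
  | n + 1 => ((setStar (Set.univ : Set A) (leftStarSeries A n) : AddSubgroup A) : Set A)

/-- `A` is Smoktunowicz-nilpotent if `A^{(n)} = A^k = 0` for some naturals `n, k`. -/
def IsSmoktunowiczNilpotent (A : Type u) [LeftBrace A] : Prop :=
  ∃ n k : ℕ, rightStarSeries A n = ({0} : Set A) ∧ leftStarSeries A k = ({0} : Set A)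

/-- The subbrace generated by a subset `M`: the intersection of all subbraces containing `M`. -/
def braceClosure (M : Set A) : Set A := ⋂₀ {S : Set A | IsSubbrace S ∧ M ⊆ S}

end LeftBrace

namespace LeftBraceAux

open LeftBrace

variable {A : Type u} [LeftBrace A]

lemma mul_zero' (a : A) : a * (0 : A) = a := by
  have h := LeftBrace.mul_add_eq a 0 0
  rw [add_zero] at h
  have h2 : a * 0 - a = a * 0 + a * 0 - a - a * 0 := by abel
  rw [← h, sub_self] at h2
  exact sub_eq_zero.mp h2

lemma one_eq_zero : (1 : A) = 0 := by
  have := mul_zero' (1 : A)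
  rw [one_mul] at this
  exact this.symm

lemma zero_mul' (a : A) : (0 : A) * a = a := by
  rw [← one_eq_zero, one_mul]

lemma mul_neg' (a b : A) : a * (-b) = a + a - a * b := by
  have h := LeftBrace.mul_add_eq a b (-b)
  rw [add_neg_cancel, mul_zero'] at h
  have h2 : a * (-b) - (a + a - a * b) = a * b + a * (-b) - a - a := by abel
  rw [← h, sub_self] at h2
  exact sub_eq_zero.mp h2

lemma mul_sub' (x y z : A) : x * (y - z) = x * y - x * z + x := by
  rw [sub_eq_add_neg, LeftBrace.mul_add_eq, mul_neg']
  abel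

lemma bstar_add (x y z : A) : bstar x (y + z) = bstar x y + bstar x z := by
  simp only [bstar, LeftBrace.mul_add_eq]
  abel

/-- `bstar x` as an additive group hom in the second argument. -/
def bstarHom (x : A) : A →+ A := AddMonoidHom.mk' (bstar x) (bstar_add x)

lemma bstar_zsmul (x y : A) (n : ℤ) : bstar x (n • y) = n • bstar x y :=
  map_zsmul (bstarHom x) n y

lemma mul_bstar (x y z : A) : bstar (x * y) z = bstar x (bstar y z) + bstar y z + bstar x z := by
  simp only [bstar, mul_sub', mul_assoc]
  abel

/-- `c` is in the `⋆`-center. -/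
def Central (c : A) : Prop := ∀ x : A, bstar c x = 0 ∧ bstar x c = 0

lemma central_mul_eq {c : A} (hc : Central c) (x : A) : c * x = c + x := by
  have h := (hc x).1
  rw [bstar, sub_sub] at h
  exact sub_eq_zero.mp h

lemma central_zero : Central (0 : A) := by
  intro x
  constructor
  · rw [bstar, zero_mul']; abel
  · rw [bstar, mul_zero']; abel

lemma central_add {c d : A} (hc : Central c) (hd : Central d) : Central (c + d) := by
  intro x
  constructor
  · rw [← central_mul_eq hc d, mul_bstar, (hc _).1, (hd _).1, (hc _).1]; abel
  · rw [bstar_add, (hc x).2, (hd x).2, add_zero]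

lemma central_neg {c : A} (hc : Central c) : Central (-c) := by
  intro x
  have hinv : (-c) * x = x - c := by
    have h1 : c * ((-c) * x) = x := by
      rw [← mul_assoc, show c * (-c) = (1 : A) by
        rw [central_mul_eq hc, add_neg_cancel, one_eq_zero], one_mul]
    have h2 : c * ((-c) * x) = c + (-c) * x := central_mul_eq hc _
    rw [h2] at h1
    rw [eq_sub_iff_add_eq, add_comm, h1]
  constructor
  · rw [bstar, hinv]; abel
  · have : bstar x (-c) = - bstar x c := map_neg (bstarHom x) c
    rw [this, (hc x).2, neg_zero]

lemma central_zsmul {c : A} (hc : Central c) (n : ℤ) : Central (n • c) := by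
  induction n using Int.induction_on with
  | zero => simpa using central_zero
  | succ k ih =>
      have : ((k : ℤ) + 1) • c = (k : ℤ) • c + c := by rw [add_zsmul, one_zsmul]
      rw [this]; exact central_add ih hc
  | pred k ih =>
      have : (-(k : ℤ) - 1) • c = (-(k : ℤ)) • c + (-c) := by
        rw [sub_zsmul, one_zsmul]
        try rw [sub_eq_add_neg]
      rw [this]; exact central_add ih (central_neg hc)

lemma bstar_central_mul_left {u : A} (hu : Central u) (w x : A) :
    bstar (u * w) x = bstar w x := by
  rw [mul_bstar, (hu _).1, (hu _).1]; abel

lemma bstar_add_central_left {u : A} (hu : Central u) (w x : A) :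
    bstar (w + u) x = bstar w x := by
  rw [add_comm, ← central_mul_eq hu w, bstar_central_mul_left hu]

lemma bstar_add_central_right {u : A} (hu : Central u) (w x : A) :
    bstar x (w + u) = bstar x w := by
  rw [bstar_add, (hu x).2, add_zero]

lemma mul_eq_bstar_add (x y : A) : x * y = bstar x y + x + y := by
  rw [bstar]; abel

lemma finAddOrder_of_zsmul {c : A} {n : ℤ} (hn : n ≠ 0) (h0 : n • c = 0) :
    IsOfFinAddOrder c := by
  rw [isOfFinAddOrder_iff_nsmul_eq_zero]
  refine ⟨n.natAbs, Int.natAbs_pos.mpr hn, ?_⟩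
  have : ((n.natAbs : ℤ)) • c = 0 := by
    rcases Int.natAbs_eq n with h | h
    · rw [← h]; exact h0
    · rw [show ((n.natAbs : ℤ)) = -n by omega, neg_zsmul, h0, neg_zero]
  rwa [natCast_zsmul] at this

section Main

variable {a : A} (hl : ∀ x : A, Central (bstar a x)) (hr : ∀ x : A, Central (bstar x a))

include hl hr in
lemma zsmul_bstar (n : ℤ) : bstar (n • a) a = n • bstar a a := by
  have step : ∀ m : ℤ, bstar ((m + 1) • a) a = bstar (m • a) a + bstar a a := by
    intro m
    have h1 : (m + 1) • a = a * (m • a) + (-(bstar a (m • a))) := by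
      rw [mul_eq_bstar_add, add_zsmul, one_zsmul]
      abel
    rw [h1, bstar_add_central_left (central_neg (hl _)), mul_bstar, ((hr _) _).2]
    abel
  induction n using Int.induction_on with
  | zero => simp [bstar, zero_mul']
  | succ k ih => rw [step, ih, add_zsmul, one_zsmul]
  | pred k ih =>
      have := step (-(k : ℤ) - 1)
      rw [sub_add_cancel, ih] at this
      have h2 : bstar ((-(k : ℤ) - 1) • a) a = (-(k : ℤ)) • bstar a a - bstar a a := by
        have h3 : bstar ((-(k : ℤ) - 1) • a) a + bstar a a = (-(k : ℤ)) • bstar a a := this.symm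
        rw [← h3]; abel
      rw [h2, sub_zsmul, one_zsmul]
      try abel

include hl hr in
lemma zsmul_bstar_zsmul (m n : ℤ) : bstar (m • a) (n • a) = (m * n) • bstar a a := by
  rw [bstar_zsmul, zsmul_bstar hl hr, ← mul_zsmul, mul_comm]

end Main

end LeftBraceAux

open LeftBrace in
/-- **Lemma.** Let `A` be a left brace and `a ∈ ζ₂(⋆,A)` of infinite additive order with
`c = a ⋆ a` of infinite additive order.  Then `br(2a)` is not an ideal of `A`. -/
theorem braceClosure_two_smul_not_isIdeal
    {A : Type u} [LeftBrace A] (a : A) (ha : a ∈ zetaNat A 2)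
    (h1 : ¬ IsOfFinAddOrder a) (h2 : ¬ IsOfFinAddOrder (bstar a a)) :
    ¬ IsIdeal (braceClosure {a + a}) := by
  open LeftBraceAux in
  have ha2 : ∀ x : A, Central (bstar a x) ∧ Central (bstar x a) := by
    simp only [zetaNat, nextCenter, Set.mem_setOf_eq, Set.mem_singleton_iff] at ha
    exact fun x => ⟨fun y => (ha x).1 y, fun y => (ha x).2 y⟩
  have hl : ∀ x : A, Central (bstar a x) := fun x => (ha2 x).1
  have hr : ∀ x : A, Central (bstar x a) := fun x => (ha2 x).2
  have hcc : Central (bstar a a) := hl a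
  set S : Set A :=
    {x : A | ∃ m k : ℤ, x = (2 * m) • a + (4 * k) • bstar a a} with hSdef
  have hSstar : ∀ m k m' k' : ℤ,
      bstar ((2 * m) • a + (4 * k) • bstar a a) ((2 * m') • a + (4 * k') • bstar a a)
        = (4 * (m * m')) • bstar a a := by
    intro m k m' k'
    rw [bstar_add_central_right (central_zsmul hcc _),
      bstar_add_central_left (central_zsmul hcc _), zsmul_bstar_zsmul hl hr,
      show (2 * m) * (2 * m') = 4 * (m * m') from by ring]
  have hS : IsSubbrace S := by
    refine ⟨⟨0, 0, by simp⟩, ?_, ?_, ?_, ?_⟩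
    · rintro x y ⟨m, k, rfl⟩ ⟨m', k', rfl⟩
      refine ⟨m + m', k + k', ?_⟩
      rw [show (2 * (m + m') : ℤ) = 2 * m + 2 * m' from by ring,
        show (4 * (k + k') : ℤ) = 4 * k + 4 * k' from by ring, add_zsmul, add_zsmul]
      abel
    · rintro x ⟨m, k, rfl⟩
      refine ⟨-m, -k, ?_⟩
      rw [show (2 * (-m) : ℤ) = -(2 * m) from by ring,
        show (4 * (-k) : ℤ) = -(4 * k) from by ring, neg_zsmul, neg_zsmul]
      abel
    · rintro x y ⟨m, k, rfl⟩ ⟨m', k', rfl⟩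
      refine ⟨m + m', m * m' + k + k', ?_⟩
      rw [mul_eq_bstar_add, hSstar,
        show (2 * (m + m') : ℤ) = 2 * m + 2 * m' from by ring,
        show (4 * (m * m' + k + k') : ℤ) = 4 * (m * m') + 4 * k + 4 * k' from by ring,
        add_zsmul, add_zsmul, add_zsmul]
      abel
    · rintro x ⟨m, k, rfl⟩
      have hxy : ((2 * m) • a + (4 * k) • bstar a a) *
          ((2 * (-m)) • a + (4 * (m * m - k)) • bstar a a) = 1 := by
        rw [mul_eq_bstar_add, hSstar, one_eq_zero,
          show (2 * (-m) : ℤ) = -(2 * m) from by ring,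
          show (4 * (m * (-m)) : ℤ) = -(4 * (m * m)) from by ring,
          show (4 * (m * m - k) : ℤ) = 4 * (m * m) + -(4 * k) from by ring,
          neg_zsmul, neg_zsmul, add_zsmul, neg_zsmul]
        abel
      rw [inv_eq_of_mul_eq_one_right hxy]
      exact ⟨-m, m * m - k, rfl⟩
  have haaS : a + a ∈ S := by
    refine ⟨1, 0, ?_⟩
    norm_num [two_zsmul]
  have hsub : braceClosure {a + a} ⊆ S := fun x hx =>
    Set.mem_sInter.mp hx S ⟨hS, Set.singleton_subset_iff.mpr haaS⟩
  have hmemcl : a + a ∈ braceClosure {a + a} :=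
    Set.mem_sInter.mpr fun t ht => ht.2 rfl
  intro hI
  have hmem : bstar a (a + a) ∈ S :=
    hsub (hI.star_mem_left a (Set.mem_univ a) (a + a) hmemcl)
  have h2c : bstar a (a + a) = (2 : ℤ) • bstar a a := by
    rw [bstar_add, two_zsmul]
  rw [h2c] at hmem
  obtain ⟨m, k, he⟩ := hmem
  have h0 : (0 : A) = (2 * m) • bstar a a := by
    have h' := congrArg (fun z => bstar z a) he
    rwa [((central_zsmul hcc 2) a).1,
      bstar_add_central_left (central_zsmul hcc (4 * k)), zsmul_bstar hl hr] at h'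
  have hm : m = 0 := by
    by_contra hm0
    exact h2 (finAddOrder_of_zsmul (mul_ne_zero two_ne_zero hm0) h0.symm)
  have hfin : ((2 : ℤ) - 4 * k) • bstar a a = 0 := by
    rw [sub_zsmul, he, hm]
    norm_num
  exact h2 (finAddOrder_of_zsmul (by omega : (2 : ℤ) - 4 * k ≠ 0) hfin)
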